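/- arXiv:2403.18925 — 10 statements merged into one kernel-verified Lean document; each statement's English description precedes it below -/
import Mathlib

section
/- Assume E₁ is unrestricted. Then for every operation 𝓘 from E₁ to E₂ there exists a unique map 𝓘* : E₂ → E₁ such that s(𝓘*(a)) = 𝓘(s)(a) for all s ∈ S₁ and a ∈ E₂; moreover 𝓘* is affine: for every finite family a₁, …, aₙ ∈ E₂ and λ₁, …, λₙ ∈ [0,1] with ∑ᵢ λᵢ = 1, one has 𝓘*(∑ᵢ λᵢ • aᵢ) = ∑ᵢ λᵢ • 𝓘*(aᵢ). -/
/-- `S` is a nonempty convex order-determining set of states on the interval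
effect algebra `[0, u]` of `V`. -/
def IsStateSpace {V : Type*} [AddCommGroup V] [PartialOrder V] [IsOrderedAddMonoid V] [Module ℝ V]
    (u : V) (S : Set (V →ₗ[ℝ] ℝ)) : Prop :=
  S.Nonempty ∧
  (∀ s ∈ S, (∀ x : V, 0 ≤ x → 0 ≤ s x) ∧ s u = 1) ∧
  (∀ s ∈ S, ∀ s' ∈ S, ∀ t : ℝ, 0 ≤ t → t ≤ 1 → t • s + (1 - t) • s' ∈ S) ∧
  (∀ v w : V, (∀ s ∈ S, s v ≤ s w) → v ≤ w)

/-- An operation from the effect algebra of `V₁` to that of `V₂`: an affine map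
sending every state in `S₁` to a substate of `S₂`. -/
def IsOperation {V₁ V₂ : Type*} [AddCommGroup V₁] [PartialOrder V₁] [IsOrderedAddMonoid V₁] [Module ℝ V₁]
    [AddCommGroup V₂] [PartialOrder V₂] [IsOrderedAddMonoid V₂] [Module ℝ V₂]
    (S₁ : Set (V₁ →ₗ[ℝ] ℝ)) (S₂ : Set (V₂ →ₗ[ℝ] ℝ))
    (I : (V₁ →ₗ[ℝ] ℝ) → (V₂ →ₗ[ℝ] ℝ)) : Prop :=
  (∀ s ∈ S₁, ∃ lam : ℝ, 0 ≤ lam ∧ lam ≤ 1 ∧ ∃ t ∈ S₂, I s = lam • t) ∧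
  (∀ s ∈ S₁, ∀ s' ∈ S₁, ∀ t : ℝ, 0 ≤ t → t ≤ 1 →
    I (t • s + (1 - t) • s') = t • I s + (1 - t) • I s')

theorem stmt_1
    {V₁ V₂ : Type*} [AddCommGroup V₁] [PartialOrder V₁] [IsOrderedAddMonoid V₁] [Module ℝ V₁]
    [AddCommGroup V₂] [PartialOrder V₂] [IsOrderedAddMonoid V₂] [Module ℝ V₂]
    (hsmul₁ : ∀ (c : ℝ) (x : V₁), 0 ≤ c → 0 ≤ x → 0 ≤ c • x)
    (hsmul₂ : ∀ (c : ℝ) (x : V₂), 0 ≤ c → 0 ≤ x → 0 ≤ c • x)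
    (u₁ : V₁) (hu₁0 : 0 ≤ u₁) (hu₁ne : u₁ ≠ 0)
    (u₂ : V₂) (hu₂0 : 0 ≤ u₂) (hu₂ne : u₂ ≠ 0)
    (S₁ : Set (V₁ →ₗ[ℝ] ℝ)) (S₂ : Set (V₂ →ₗ[ℝ] ℝ))
    (hS₁ : IsStateSpace u₁ S₁) (hS₂ : IsStateSpace u₂ S₂)
    (hunres : ∀ f : (V₁ →ₗ[ℝ] ℝ) → ℝ,
      (∀ s ∈ S₁, 0 ≤ f s ∧ f s ≤ 1) →
      (∀ s ∈ S₁, ∀ s' ∈ S₁, ∀ t : ℝ, 0 ≤ t → t ≤ 1 →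
        f (t • s + (1 - t) • s') = t * f s + (1 - t) * f s') →
      ∃ a : V₁, 0 ≤ a ∧ a ≤ u₁ ∧ ∀ s ∈ S₁, f s = s a)
    (I : (V₁ →ₗ[ℝ] ℝ) → (V₂ →ₗ[ℝ] ℝ)) (hI : IsOperation S₁ S₂ I) :
    ∃ D : V₂ → V₁,
      (∀ a : V₂, 0 ≤ a → a ≤ u₂ → 0 ≤ D a ∧ D a ≤ u₁) ∧
      (∀ s ∈ S₁, ∀ a : V₂, 0 ≤ a → a ≤ u₂ → s (D a) = I s a) ∧
      (∀ (n : ℕ) (a : Fin n → V₂) (lam : Fin n → ℝ),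
        (∀ i, 0 ≤ a i ∧ a i ≤ u₂) → (∀ i, 0 ≤ lam i ∧ lam i ≤ 1) →
        (∑ i, lam i) = 1 →
        D (∑ i, lam i • a i) = ∑ i, lam i • D (a i)) ∧
      (∀ D' : V₂ → V₁,
        (∀ a : V₂, 0 ≤ a → a ≤ u₂ → 0 ≤ D' a ∧ D' a ≤ u₁) →
        (∀ s ∈ S₁, ∀ a : V₂, 0 ≤ a → a ≤ u₂ → s (D' a) = I s a) →
        ∀ a : V₂, 0 ≤ a → a ≤ u₂ → D' a = D a) := by
  
  obtain ⟨hS₁ne, hS₁st, hS₁cv, hS₁od⟩ := hS₁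
  obtain ⟨hS₂ne, hS₂st, hS₂cv, hS₂od⟩ := hS₂
  obtain ⟨hIsub, hIaff⟩ := hI
  -- key: for every effect a, there is b with s b = I s a
  have key : ∀ a : V₂, 0 ≤ a → a ≤ u₂ →
      ∃ b : V₁, 0 ≤ b ∧ b ≤ u₁ ∧ ∀ s ∈ S₁, s b = I s a := by
    intro a ha0 ha1
    have hbound : ∀ s ∈ S₁, 0 ≤ I s a ∧ I s a ≤ 1 := by
      intro s hs
      obtain ⟨lam, hl0, hl1, t, ht, hst⟩ := hIsub s hs
      have hta0 : 0 ≤ t a := (hS₂st t ht).1 a ha0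
      have hta1 : t a ≤ 1 := by
        have h := (hS₂st t ht).1 _ (sub_nonneg.mpr ha1)
        rw [map_sub, (hS₂st t ht).2] at h
        linarith
      have : I s a = lam * t a := by rw [hst]; simp
      constructor
      · rw [this]; positivity
      · rw [this]
        exact mul_le_one₀ hl1 hta0 hta1
    have haff : ∀ s ∈ S₁, ∀ s' ∈ S₁, ∀ t : ℝ, 0 ≤ t → t ≤ 1 →
        I (t • s + (1 - t) • s') a = t * I s a + (1 - t) * I s' a := by
      intro s hs s' hs' t ht0 ht1
      rw [hIaff s hs s' hs' t ht0 ht1]; simp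
    obtain ⟨b, hb0, hb1, hb⟩ := hunres (fun s => I s a) hbound haff
    exact ⟨b, hb0, hb1, fun s hs => (hb s hs).symm⟩
  classical
  set D : V₂ → V₁ := fun a =>
    if h : 0 ≤ a ∧ a ≤ u₂ then (key a h.1 h.2).choose else 0 with hD
  have hDspec : ∀ a : V₂, (h0 : 0 ≤ a) → (h1 : a ≤ u₂) →
      0 ≤ D a ∧ D a ≤ u₁ ∧ ∀ s ∈ S₁, s (D a) = I s a := by
    intro a h0 h1
    have : D a = (key a h0 h1).choose := by
      rw [hD]; simp only [dif_pos (⟨h0, h1⟩ : 0 ≤ a ∧ a ≤ u₂)]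
    rw [this]
    exact (key a h0 h1).choose_spec
  have heq : ∀ x y : V₁, (∀ s ∈ S₁, s x = s y) → x = y := by
    intro x y h
    exact le_antisymm (hS₁od x y fun s hs => (h s hs).le)
      (hS₁od y x fun s hs => (h s hs).ge)
  refine ⟨D, fun a h0 h1 => ⟨(hDspec a h0 h1).1, (hDspec a h0 h1).2.1⟩,
    fun s hs a h0 h1 => (hDspec a h0 h1).2.2 s hs, ?_, ?_⟩
  · intro n a lam ha hl hsum
    have hs0 : 0 ≤ ∑ i, lam i • a i :=
      Finset.sum_nonneg fun i _ => hsmul₂ _ _ (hl i).1 (ha i).1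
    have hs1 : (∑ i, lam i • a i) ≤ u₂ := by
      calc (∑ i, lam i • a i) ≤ ∑ i, lam i • u₂ := by
            apply Finset.sum_le_sum
            intro i _
            have := hsmul₂ (lam i) (u₂ - a i) (hl i).1 (sub_nonneg.mpr (ha i).2)
            rw [smul_sub] at this
            exact sub_nonneg.mp this
        _ = (∑ i, lam i) • u₂ := Finset.sum_smul.symm
        _ = u₂ := by rw [hsum, one_smul]
    apply heq
    intro s hs
    rw [(hDspec _ hs0 hs1).2.2 s hs, map_sum, map_sum]
    apply Finset.sum_congr rfl
    intro i _
    rw [map_smul, map_smul, (hDspec _ (ha i).1 (ha i).2).2.2 s hs]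
  · intro D' hD'b hD' a h0 h1
    apply heq
    intro s hs
    rw [hD' s hs a h0 h1, (hDspec a h0 h1).2.2 s hs]
end

section
/- Let 𝓘 = (𝓘ₓ)_{x∈Ω₁} and 𝓙 = (𝓙_y)_{y∈Ω₂} be instruments from E₁ to E₂ that coexist, i.e., there is a bi-instrument K = (K_{xy})_{(x,y)∈Ω₁×Ω₂} from E₁ to E₂ with ∑_{y∈Ω₂} K_{xy}(s) = 𝓘ₓ(s) and ∑_{x∈Ω₁} K_{xy}(s) = 𝓙_y(s) for all s ∈ S₁. Suppose 𝓘̂ₓ, 𝓙̂_y, K̂_{xy} ∈ E₁ are the measured effects, i.e., s(𝓘̂ₓ) = 𝓘ₓ(s)(u₂), s(𝓙̂_y) = 𝓙_y(s)(u₂) and s(K̂_{xy}) = K_{xy}(s)(u₂) for all s ∈ S₁ and all indices. Then (K̂_{xy}) is a bi-observable on E₁ with ∑_{y∈Ω₂} K̂_{xy} = 𝓘̂ₓ for all x ∈ Ω₁ and ∑_{x∈Ω₁} K̂_{xy} = 𝓙̂_y for all y ∈ Ω₂; in particular the measured observables 𝓘̂ and 𝓙̂ coexist. -/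
theorem stmt_3
    {V₁ V₂ : Type*} [AddCommGroup V₁] [PartialOrder V₁] [IsOrderedAddMonoid V₁] [Module ℝ V₁]
    [AddCommGroup V₂] [PartialOrder V₂] [IsOrderedAddMonoid V₂] [Module ℝ V₂]
    (hsmul₁ : ∀ (c : ℝ) (x : V₁), 0 ≤ c → 0 ≤ x → 0 ≤ c • x)
    (hsmul₂ : ∀ (c : ℝ) (x : V₂), 0 ≤ c → 0 ≤ x → 0 ≤ c • x)
    (u₁ : V₁) (hu₁0 : 0 ≤ u₁) (hu₁ne : u₁ ≠ 0)
    (u₂ : V₂) (hu₂0 : 0 ≤ u₂) (hu₂ne : u₂ ≠ 0)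
    (S₁ : Set (V₁ →ₗ[ℝ] ℝ)) (S₂ : Set (V₂ →ₗ[ℝ] ℝ))
    (hS₁ : IsStateSpace u₁ S₁) (hS₂ : IsStateSpace u₂ S₂)
    {Ω₁ Ω₂ : Type*} [Fintype Ω₁] [Nonempty Ω₁] [Fintype Ω₂] [Nonempty Ω₂]
    (I : Ω₁ → (V₁ →ₗ[ℝ] ℝ) → (V₂ →ₗ[ℝ] ℝ))
    (J : Ω₂ → (V₁ →ₗ[ℝ] ℝ) → (V₂ →ₗ[ℝ] ℝ))
    (K : Ω₁ → Ω₂ → (V₁ →ₗ[ℝ] ℝ) → (V₂ →ₗ[ℝ] ℝ))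
    (hIop : ∀ x, IsOperation S₁ S₂ (I x))
    (hIch : ∀ s ∈ S₁, (∑ x, I x s) ∈ S₂)
    (hJop : ∀ y, IsOperation S₁ S₂ (J y))
    (hJch : ∀ s ∈ S₁, (∑ y, J y s) ∈ S₂)
    (hKop : ∀ x y, IsOperation S₁ S₂ (K x y))
    (hKch : ∀ s ∈ S₁, (∑ x, ∑ y, K x y s) ∈ S₂)
    (hmarg₁ : ∀ x, ∀ s ∈ S₁, (∑ y, K x y s) = I x s)
    (hmarg₂ : ∀ y, ∀ s ∈ S₁, (∑ x, K x y s) = J y s)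
    (Ihat : Ω₁ → V₁) (hIhatE : ∀ x, 0 ≤ Ihat x ∧ Ihat x ≤ u₁)
    (hIhat : ∀ x, ∀ s ∈ S₁, s (Ihat x) = I x s u₂)
    (Jhat : Ω₂ → V₁) (hJhatE : ∀ y, 0 ≤ Jhat y ∧ Jhat y ≤ u₁)
    (hJhat : ∀ y, ∀ s ∈ S₁, s (Jhat y) = J y s u₂)
    (Khat : Ω₁ → Ω₂ → V₁) (hKhatE : ∀ x y, 0 ≤ Khat x y ∧ Khat x y ≤ u₁)
    (hKhat : ∀ x y, ∀ s ∈ S₁, s (Khat x y) = K x y s u₂) :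
    (∑ x, ∑ y, Khat x y) = u₁ ∧
    (∀ x, (∑ y, Khat x y) = Ihat x) ∧
    (∀ y, (∑ x, Khat x y) = Jhat y) := by
  obtain ⟨hne, hstate, hconv, hod⟩ := hS₁
  have heq : ∀ v w : V₁, (∀ s ∈ S₁, s v = s w) → v = w := by
    intro v w h
    exact le_antisymm (hod v w fun s hs => (h s hs).le)
      (hod w v fun s hs => (h s hs).ge)
  refine ⟨?_, ?_, ?_⟩
  · refine heq _ _ fun s hs => ?_
    have h1 : s u₁ = 1 := (hstate s hs).2
    have : (∑ x, ∑ y, K x y s) u₂ = 1 := (hS₂.2.1 _ (hKch s hs)).2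
    simp only [map_sum, hKhat _ _ s hs, h1]
    simpa [LinearMap.coe_sum, Finset.sum_apply] using this
  · intro x
    refine heq _ _ fun s hs => ?_
    have := hmarg₁ x s hs
    rw [map_sum, hIhat x s hs, ← this]
    simp only [hKhat _ _ s hs]
    simp [LinearMap.coe_sum, Finset.sum_apply]
  · intro y
    refine heq _ _ fun s hs => ?_
    have := hmarg₂ y s hs
    rw [map_sum, hJhat y s hs, ← this]
    simp only [hKhat _ _ s hs]
    simp [LinearMap.coe_sum, Finset.sum_apply]
end

section
/- Let 𝓘 be an operation from E to E and let D : E → E satisfy s(D(b)) = 𝓘(s)(b) for all s ∈ S and b ∈ E, and set a = D(u) (the effect measured by 𝓘). Then the following are equivalent: (i) D(a) = a (a is 𝓘-repeatable); (ii) D(u − a) = 0; (iii) D(b) = 0 for every b ∈ E with a + b ≤ u; (iv) D(b) ≤ D(a) for every b ∈ E. -/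
theorem stmt_4
    {V : Type*} [AddCommGroup V] [PartialOrder V] [IsOrderedAddMonoid V] [Module ℝ V]
    (hsmul : ∀ (c : ℝ) (x : V), 0 ≤ c → 0 ≤ x → 0 ≤ c • x)
    (u : V) (hu0 : 0 ≤ u) (hune : u ≠ 0)
    (S : Set (V →ₗ[ℝ] ℝ)) (hS : IsStateSpace u S)
    (I : (V →ₗ[ℝ] ℝ) → (V →ₗ[ℝ] ℝ)) (hI : IsOperation S S I)
    (D : V → V) (hDE : ∀ b : V, 0 ≤ b → b ≤ u → 0 ≤ D b ∧ D b ≤ u)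
    (hD : ∀ s ∈ S, ∀ b : V, 0 ≤ b → b ≤ u → s (D b) = I s b)
    (a : V) (ha : a = D u) :
    (D a = a ↔ D (u - a) = 0) ∧
    (D a = a ↔ ∀ b : V, 0 ≤ b → b ≤ u → a + b ≤ u → D b = 0) ∧
    (D a = a ↔ ∀ b : V, 0 ≤ b → b ≤ u → D b ≤ D a) := by
  obtain ⟨hne, hstate, hconv, hod⟩ := hS
  obtain ⟨hsub, haff⟩ := hI
  have ha0 : 0 ≤ a := ha ▸ (hDE u hu0 le_rfl).1
  have hau : a ≤ u := ha ▸ (hDE u hu0 le_rfl).2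
  have hua0 : 0 ≤ u - a := sub_nonneg.2 hau
  have huau : u - a ≤ u := sub_le_self u ha0
  have hsa : ∀ s ∈ S, s a = I s u := fun s hs => by
    rw [ha]; exact hD s hs u hu0 le_rfl
  have heq : ∀ v w : V, (∀ s ∈ S, s v = s w) → v = w := fun v w h =>
    le_antisymm (hod v w fun s hs => (h s hs).le) (hod w v fun s hs => (h s hs).ge)
  have hmono : ∀ s ∈ S, ∀ b c : V, 0 ≤ b → b ≤ u → 0 ≤ c → c ≤ u → b ≤ c →
      s (D b) ≤ s (D c) := by
    intro s hs b c hb0 hbu hc0 hcu hbc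
    rw [hD s hs b hb0 hbu, hD s hs c hc0 hcu]
    obtain ⟨lam, hl0, hl1, t, ht, hIt⟩ := hsub s hs
    rw [hIt]
    simp only [LinearMap.smul_apply, smul_eq_mul]
    have htpos := (hstate t ht).1
    have htbc : t b ≤ t c := by
      have h1 := htpos (c - b) (sub_nonneg.2 hbc)
      rw [map_sub] at h1; linarith
    exact mul_le_mul_of_nonneg_left htbc hl0
  have h12 : D a = a ↔ D (u - a) = 0 := by
    constructor
    · intro h
      apply heq; intro s hs
      rw [hD s hs (u - a) hua0 huau, map_sub, map_zero]
      have h1 : (I s) a = s (D a) := (hD s hs a ha0 hau).symm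
      have h2 : (I s) u = s a := (hsa s hs).symm
      rw [h1, h2, h]; ring
    · intro h
      apply heq; intro s hs
      have h3 : s (D (u - a)) = 0 := by rw [h, map_zero]
      rw [hD s hs (u - a) hua0 huau, map_sub] at h3
      rw [hD s hs a ha0 hau]
      have h2 : (I s) u = s a := (hsa s hs).symm
      linarith
  refine ⟨h12, ⟨?_, ?_⟩, ?_, ?_⟩
  · intro h b hb0 hbu hab
    have hDua : D (u - a) = 0 := h12.mp h
    apply heq; intro s hs
    rw [map_zero]
    have hbua : b ≤ u - a := le_sub_iff_add_le.mpr (by rwa [add_comm])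
    have hle : s (D b) ≤ s (D (u - a)) := hmono s hs b (u - a) hb0 hbu hua0 huau hbua
    rw [hDua, map_zero] at hle
    have hge : 0 ≤ s (D b) := (hstate s hs).1 _ (hDE b hb0 hbu).1
    linarith
  · intro h
    refine h12.mpr (h (u - a) hua0 huau (le_of_eq (by abel)))
  · intro h b hb0 hbu
    apply hod; intro s hs
    rw [h, ha]
    exact hmono s hs b u hb0 hbu hu0 le_rfl hbu
  · intro h
    have h1 : a ≤ D a := by have h4 := h u hu0 le_rfl; rwa [← ha] at h4
    have h2 : D a ≤ a := by
      apply hod; intro s hs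
      have h3 := hmono s hs a u ha0 hau hu0 le_rfl hau
      rwa [← ha] at h3
    exact le_antisymm h2 h1
end

section
/- Let 𝓘 be an operation from E to E and let D : E → E satisfy s(D(b)) = 𝓘(s)(b) for all s ∈ S and b ∈ E, and set a = D(u). Then D(a) = a (a is 𝓘-repeatable) if and only if for every s ∈ S, every λ ∈ (0,1] and every t ∈ S with 𝓘(s) = λ • t one has 𝓘(t)(u) = 1 (equivalently, extending 𝓘 to substates by homogeneity, 𝓘(𝓘(s))(u) = 𝓘(s)(u) for all s ∈ S). -/
theorem stmt_5
    {V : Type*} [AddCommGroup V] [PartialOrder V] [IsOrderedAddMonoid V] [Module ℝ V]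
    (hsmul : ∀ (c : ℝ) (x : V), 0 ≤ c → 0 ≤ x → 0 ≤ c • x)
    (u : V) (hu0 : 0 ≤ u) (hune : u ≠ 0)
    (S : Set (V →ₗ[ℝ] ℝ)) (hS : IsStateSpace u S)
    (I : (V →ₗ[ℝ] ℝ) → (V →ₗ[ℝ] ℝ)) (hI : IsOperation S S I)
    (D : V → V) (hDE : ∀ b : V, 0 ≤ b → b ≤ u → 0 ≤ D b ∧ D b ≤ u)
    (hD : ∀ s ∈ S, ∀ b : V, 0 ≤ b → b ≤ u → s (D b) = I s b)
    (a : V) (ha : a = D u) :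
    D a = a ↔
      ∀ s ∈ S, ∀ lam : ℝ, 0 < lam → lam ≤ 1 → ∀ t ∈ S, I s = lam • t →
        I t u = 1 := by
  obtain ⟨hne, hstate, hconv, hord⟩ := hS
  have haE : 0 ≤ a ∧ a ≤ u := ha ▸ hDE u hu0 le_rfl
  -- key: for every s ∈ S, s (D a) = s a under the RHS condition; and the values
  constructor
  · intro hrep s hs lam hlam hlam1 t ht hIs
    have hsa : s a = s (D u) := by rw [ha]
    have h1 : s a = lam * t u := by
      rw [hsa, hD s hs u hu0 le_rfl, hIs]; simp
    have h2 : s a = lam * (I t u) := by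
      have : s (D a) = s a := by rw [hrep]
      rw [← this, hD s hs a haE.1 haE.2, hIs]
      simp only [LinearMap.smul_apply, smul_eq_mul]
      rw [ha, hD t ht u hu0 le_rfl]
    have htu : t u = 1 := (hstate t ht).2
    have := h1.symm.trans h2
    rw [htu, mul_one] at this
    field_simp at this
    linarith [this]
  · intro h
    have key : ∀ s ∈ S, s (D a) = s a := by
      intro s hs
      obtain ⟨lam, hlam0, hlam1, t, ht, hIs⟩ := hI.1 s hs
      have hsa : s a = lam * t u := by
        rw [ha, hD s hs u hu0 le_rfl, hIs]; simp
      have hsDa : s (D a) = lam * (I t u) := by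
        rw [hD s hs a haE.1 haE.2, hIs]
        simp only [LinearMap.smul_apply, smul_eq_mul]
        rw [ha, hD t ht u hu0 le_rfl]
      rcases eq_or_lt_of_le hlam0 with h0 | hpos
      · rw [hsa, hsDa, ← h0]; ring
      · rw [hsa, hsDa, h s hs lam hpos hlam1 t ht hIs, (hstate t ht).2]
    exact le_antisymm (hord _ _ fun s hs => (key s hs).le)
      (hord _ _ fun s hs => (key s hs).ge)
end

section
/- An effect a ∈ E is repeatable — meaning there exist an operation 𝓘 from E to E and a map D : E → E with s(D(b)) = 𝓘(s)(b) for all s ∈ S and b ∈ E, such that D(u) = a and D(a) = a — if and only if a = 0 or there exists s₁ ∈ S with s₁(a) = 1. -/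
theorem stmt_6
    {V : Type*} [AddCommGroup V] [PartialOrder V] [IsOrderedAddMonoid V] [Module ℝ V]
    (hsmul : ∀ (c : ℝ) (x : V), 0 ≤ c → 0 ≤ x → 0 ≤ c • x)
    (u : V) (hu0 : 0 ≤ u) (hune : u ≠ 0)
    (S : Set (V →ₗ[ℝ] ℝ)) (hS : IsStateSpace u S)
    (a : V) (haE : 0 ≤ a ∧ a ≤ u) :
    (∃ (I : (V →ₗ[ℝ] ℝ) → (V →ₗ[ℝ] ℝ)) (D : V → V),
      IsOperation S S I ∧
      (∀ b : V, 0 ≤ b → b ≤ u → 0 ≤ D b ∧ D b ≤ u) ∧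
      (∀ s ∈ S, ∀ b : V, 0 ≤ b → b ≤ u → s (D b) = I s b) ∧
      D u = a ∧ D a = a) ↔
    (a = 0 ∨ ∃ s₁ ∈ S, s₁ a = 1) := by
  obtain ⟨hne, hstate, hconv, hord⟩ := hS
  constructor
  · rintro ⟨I, D, ⟨hsub, haff⟩, hDE, hSD, hDu, hDa⟩
    by_cases ha : a = 0
    · exact Or.inl ha
    right
    -- find s ∈ S with s a ≠ 0
    have hex : ∃ s ∈ S, s a ≠ 0 := by
      by_contra h
      push_neg at h
      apply ha
      have h1 : a ≤ 0 := hord a 0 (fun s hs => by simp [h s hs])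
      exact le_antisymm h1 haE.1
    obtain ⟨s, hs, hsa⟩ := hex
    obtain ⟨lam, hlam0, hlam1, t, ht, hIs⟩ := hsub s hs
    have htu : t u = 1 := (hstate t ht).2
    have h1 : s a = lam := by
      have := hSD s hs u hu0 le_rfl
      rw [hDu, hIs] at this
      simpa [htu] using this
    have h2 : s a = lam * t a := by
      have := hSD s hs a haE.1 haE.2
      rw [hDa, hIs] at this
      simpa using this
    have hta : t a = 1 := by
      have hlne : lam ≠ 0 := h1 ▸ hsa
      have : lam * t a = lam * 1 := by rw [mul_one, ← h2]; exact h1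
      exact mul_left_cancel₀ hlne this
    exact ⟨t, ht, hta⟩
  · rintro (rfl | ⟨s₁, hs₁, hs₁a⟩)
    · obtain ⟨t₀, ht₀⟩ := hne
      refine ⟨fun _ => 0, fun _ => 0, ⟨?_, ?_⟩, ?_, ?_, by simp, by simp⟩
      · exact fun s hs => ⟨0, le_rfl, zero_le_one, t₀, ht₀, by simp⟩
      · intro s hs s' hs' t ht0 ht1; simp
      · intro b hb hbu; exact ⟨le_rfl, hu0⟩
      · intro s hs b hb hbu; simp
    · refine ⟨fun s => (s a) • s₁, fun b => (s₁ b) • a, ⟨?_, ?_⟩, ?_, ?_, ?_, ?_⟩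
      · intro s hs
        refine ⟨s a, (hstate s hs).1 a haE.1, ?_, s₁, hs₁, rfl⟩
        have := (hstate s hs).1 (u - a) (sub_nonneg.mpr haE.2)
        have hsu := (hstate s hs).2
        simp only [map_sub] at this
        linarith
      · intro s hs s' hs' t ht0 ht1
        simp only [LinearMap.add_apply, LinearMap.smul_apply, smul_eq_mul]
        rw [add_smul, smul_smul, smul_smul]
      · intro b hb hbu
        have hb0 : 0 ≤ s₁ b := (hstate s₁ hs₁).1 b hb
        have hb1 : s₁ b ≤ 1 := by
          have := (hstate s₁ hs₁).1 (u - b) (sub_nonneg.mpr hbu)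
          have hsu := (hstate s₁ hs₁).2
          simp only [map_sub] at this
          linarith
        refine ⟨hsmul _ _ hb0 haE.1, ?_⟩
        calc (s₁ b) • a ≤ a := by
              have : 0 ≤ (1 - s₁ b) • a := hsmul _ _ (by linarith) haE.1
              have h := sub_nonneg.mp (by rwa [sub_smul, one_smul] at this)
              exact h
          _ ≤ u := haE.2
      · intro s hs b hb hbu
        simp [mul_comm]
      · simp [(hstate s₁ hs₁).2]
      · simp [hs₁a]
end

section
/- Let a ∈ E, let β₁, β₂ ∈ S satisfy β₁(a) = 1 and β₂(u − a) = 1, and let λ ∈ (0,1). Then the mixed Holevo operation α ↦ λ·α(a) • β₁ + (1−λ)·α(u−a) • β₂ is not pure: there do not exist b ∈ E and β ∈ S such that λ·α(a) • β₁ + (1−λ)·α(u−a) • β₂ = α(b) • β (as functionals on V) for all α ∈ S. -/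
theorem stmt_7
    {V : Type*} [AddCommGroup V] [PartialOrder V] [IsOrderedAddMonoid V] [Module ℝ V]
    (hsmul : ∀ (c : ℝ) (x : V), 0 ≤ c → 0 ≤ x → 0 ≤ c • x)
    (u : V) (hu0 : 0 ≤ u) (hune : u ≠ 0)
    (S : Set (V →ₗ[ℝ] ℝ)) (hS : IsStateSpace u S)
    (a : V) (haE : 0 ≤ a ∧ a ≤ u)
    (β₁ β₂ : V →ₗ[ℝ] ℝ) (hβ₁ : β₁ ∈ S) (hβ₂ : β₂ ∈ S)
    (hβ₁a : β₁ a = 1) (hβ₂a' : β₂ (u - a) = 1)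
    (lam : ℝ) (hlam0 : 0 < lam) (hlam1 : lam < 1) :
    ¬ ∃ (b : V) (β : V →ₗ[ℝ] ℝ), 0 ≤ b ∧ b ≤ u ∧ β ∈ S ∧
      ∀ α ∈ S, (lam * α a) • β₁ + ((1 - lam) * α (u - a)) • β₂ = α b • β := by
  rintro ⟨b, β, hb0, hbu, hβS, h⟩
  have hβ₁u : β₁ u = 1 := (hS.2.1 β₁ hβ₁).2
  have hβ₂u : β₂ u = 1 := (hS.2.1 β₂ hβ₂).2
  have hβu : β u = 1 := (hS.2.1 β hβS).2
  have hβ₁a' : β₁ (u - a) = 0 := by simp [map_sub, hβ₁u, hβ₁a]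
  have hβ₂a : β₂ a = 0 := by
    have := hβ₂a'
    rw [map_sub, hβ₂u] at this
    linarith
  have h1 := h β₁ hβ₁
  rw [hβ₁a, hβ₁a'] at h1
  simp only [mul_one, mul_zero, zero_smul, add_zero] at h1
  have h2 := h β₂ hβ₂
  rw [hβ₂a, hβ₂a'] at h2
  simp only [mul_one, mul_zero, zero_smul, zero_add] at h2
  have e1 : lam = β₁ b * β u := by
    have := congrArg (fun f : V →ₗ[ℝ] ℝ => f u) h1
    simpa [hβ₁u] using this
  rw [hβu, mul_one] at e1
  have e2 : 1 - lam = β₂ b * β u := by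
    have := congrArg (fun f : V →ₗ[ℝ] ℝ => f u) h2
    simpa [hβ₂u] using this
  rw [hβu, mul_one] at e2
  have hβ₁β : β₁ = β := by
    rw [← e1] at h1
    exact smul_right_injective _ (ne_of_gt hlam0) h1
  have hβ₂β : β₂ = β := by
    rw [← e2] at h2
    exact smul_right_injective _ (by intro hc; linarith : (1 - lam) ≠ 0) h2
  have : (1 : ℝ) = 0 := by rw [← hβ₁a, ← hβ₂a, hβ₁β, hβ₂β]
  norm_num at this
end

section
/- Let (𝓘ₓ)_{x∈Ω} be an instrument from E₁ to E₂ and let Dₓ : E₂ → E₁ satisfy s(Dₓ(b)) = 𝓘ₓ(s)(b) for all s ∈ S₁, b ∈ E₂ and x ∈ Ω. Let B = (B_y)_{y∈Ω_B} be an observable on E₂, set Aₓ := Dₓ(u₂) and (A[𝓘]B)_{xy} := Dₓ(B_y). Then: (A[𝓘]B) is a bi-observable on E₁, i.e. ∑_{x∈Ω} ∑_{y∈Ω_B} Dₓ(B_y) = u₁; A = (Aₓ) is an observable on E₁; ∑_{y∈Ω_B} Dₓ(B_y) = Aₓ for every x ∈ Ω; and the family (B|𝓘 A)_y := ∑_{x∈Ω}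 Dₓ(B_y) is an observable on E₁. Hence A and B|𝓘 A coexist with joint bi-observable A[𝓘]B. -/
theorem stmt_15
    {V₁ V₂ : Type*} [AddCommGroup V₁] [PartialOrder V₁] [IsOrderedAddMonoid V₁] [Module ℝ V₁]
    [AddCommGroup V₂] [PartialOrder V₂] [IsOrderedAddMonoid V₂] [Module ℝ V₂]
    (hsmul₁ : ∀ (c : ℝ) (x : V₁), 0 ≤ c → 0 ≤ x → 0 ≤ c • x)
    (hsmul₂ : ∀ (c : ℝ) (x : V₂), 0 ≤ c → 0 ≤ x → 0 ≤ c • x)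
    (u₁ : V₁) (hu₁0 : 0 ≤ u₁) (hu₁ne : u₁ ≠ 0)
    (u₂ : V₂) (hu₂0 : 0 ≤ u₂) (hu₂ne : u₂ ≠ 0)
    (S₁ : Set (V₁ →ₗ[ℝ] ℝ)) (S₂ : Set (V₂ →ₗ[ℝ] ℝ))
    (hS₁ : IsStateSpace u₁ S₁) (hS₂ : IsStateSpace u₂ S₂)
    {Ω : Type*} [Fintype Ω] [Nonempty Ω]
    {ΩB : Type*} [Fintype ΩB] [Nonempty ΩB]
    (I : Ω → (V₁ →ₗ[ℝ] ℝ) → (V₂ →ₗ[ℝ] ℝ))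
    (hIop : ∀ x, IsOperation S₁ S₂ (I x))
    (hIch : ∀ s ∈ S₁, (∑ x, I x s) ∈ S₂)
    (D : Ω → V₂ → V₁)
    (hDE : ∀ x, ∀ b : V₂, 0 ≤ b → b ≤ u₂ → 0 ≤ D x b ∧ D x b ≤ u₁)
    (hD : ∀ x, ∀ s ∈ S₁, ∀ b : V₂, 0 ≤ b → b ≤ u₂ → s (D x b) = I x s b)
    (B : ΩB → V₂) (hBE : ∀ y, 0 ≤ B y ∧ B y ≤ u₂)
    (hBobs : (∑ y, B y) = u₂) :
    (∑ x, ∑ y, D x (B y)) = u₁ ∧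
    ((∀ x, 0 ≤ D x u₂ ∧ D x u₂ ≤ u₁) ∧ (∑ x, D x u₂) = u₁) ∧
    (∀ x, (∑ y, D x (B y)) = D x u₂) ∧
    ((∀ y, 0 ≤ (∑ x, D x (B y)) ∧ (∑ x, D x (B y)) ≤ u₁) ∧
      (∑ y, ∑ x, D x (B y)) = u₁) := by
  obtain ⟨-, hst₁, -, hod₁⟩ := hS₁
  obtain ⟨-, hst₂, -, -⟩ := hS₂
  have heq : ∀ v w : V₁, (∀ s ∈ S₁, s v = s w) → v = w := by
    intro v w h
    exact le_antisymm (hod₁ v w fun s hs => (h s hs).le)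
      (hod₁ w v fun s hs => (h s hs).ge)
  -- key: s (∑ y, D x (B y)) = s (D x u₂) for states s
  have hrow : ∀ x, (∑ y, D x (B y)) = D x u₂ := by
    intro x
    apply heq
    intro s hs
    rw [map_sum]
    have : ∀ y, s (D x (B y)) = I x s (B y) := fun y =>
      hD x s hs (B y) (hBE y).1 (hBE y).2
    simp_rw [this, ← map_sum, hBobs, hD x s hs u₂ hu₂0 le_rfl]
  have hcol : (∑ x, D x u₂) = u₁ := by
    apply heq
    intro s hs
    rw [map_sum]
    have : ∀ x, s (D x u₂) = I x s u₂ := fun x => hD x s hs u₂ hu₂0 le_rfl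
    simp_rw [this]
    have h1 : (∑ x, I x s) u₂ = 1 := (hst₂ _ (hIch s hs)).2
    have h2 : s u₁ = 1 := (hst₁ s hs).2
    rw [h2, ← h1]
    simp [LinearMap.sum_apply]
  have hBy : ∀ y, 0 ≤ (∑ x, D x (B y)) ∧ (∑ x, D x (B y)) ≤ u₁ := by
    intro y
    have key : ∀ s ∈ S₁, s (∑ x, D x (B y)) = (∑ x, I x s) (B y) := by
      intro s hs
      rw [map_sum]
      simp_rw [fun x => hD x s hs (B y) (hBE y).1 (hBE y).2]
      simp [LinearMap.sum_apply]
    constructor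
    · apply hod₁
      intro s hs
      rw [map_zero, key s hs]
      exact (hst₂ _ (hIch s hs)).1 (B y) (hBE y).1
    · apply hod₁
      intro s hs
      rw [key s hs, (hst₁ s hs).2]
      have h1 : (∑ x, I x s) u₂ = 1 := (hst₂ _ (hIch s hs)).2
      have := (hst₂ _ (hIch s hs)).1 (u₂ - B y) (sub_nonneg.2 (hBE y).2)
      rw [map_sub, h1] at this
      linarith
  refine ⟨?_, ⟨fun x => hDE x u₂ hu₂0 le_rfl, hcol⟩, hrow, hBy, ?_⟩
  · simp_rw [hrow]; exact hcol
  · rw [Finset.sum_comm]; simp_rw [hrow]; exact hcol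
end

section
/- Let A = (Aₓ)_{x∈Ω_A} be an observable on E₁ with states αₓ ∈ S₂ (x ∈ Ω_A), and let B = (B_y)_{y∈Ω_B} be an observable on E₂ with states β_y ∈ S₃ (y ∈ Ω_B). Define the pure Holevo instruments 𝓘ₓ(γ) = γ(Aₓ) • αₓ for γ ∈ S₁ and Ĵ_y(φ) = φ(B_y) • β_y for any positive linear functional φ on V₂. Then for all γ ∈ S₁, x ∈ Ω_A, y ∈ Ω_B: Ĵ_y(𝓘ₓ(γ)) = γ((A∘B)_{xy}) • β_y, where (A∘B)_{xy} := αₓ(B_y) • Aₓ; moreover (A∘B)_{xy} ∈ E₁ for all x, y and ∑_{x∈Ω_A} ∑_{y∈Ω_B} (A∘B)_{xy} = u₁, so the composed instrument is the pure Holevo bi-instrument with effects (A∘B)_{xy} and states β'_{xy} = β_y. -/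
theorem stmt_16
    {V₁ V₂ V₃ : Type*} [AddCommGroup V₁] [PartialOrder V₁] [IsOrderedAddMonoid V₁] [Module ℝ V₁]
    [AddCommGroup V₂] [PartialOrder V₂] [IsOrderedAddMonoid V₂] [Module ℝ V₂]
    [AddCommGroup V₃] [PartialOrder V₃] [IsOrderedAddMonoid V₃] [Module ℝ V₃]
    (hsmul₁ : ∀ (c : ℝ) (x : V₁), 0 ≤ c → 0 ≤ x → 0 ≤ c • x)
    (hsmul₂ : ∀ (c : ℝ) (x : V₂), 0 ≤ c → 0 ≤ x → 0 ≤ c • x)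
    (hsmul₃ : ∀ (c : ℝ) (x : V₃), 0 ≤ c → 0 ≤ x → 0 ≤ c • x)
    (u₁ : V₁) (hu₁0 : 0 ≤ u₁) (hu₁ne : u₁ ≠ 0)
    (u₂ : V₂) (hu₂0 : 0 ≤ u₂) (hu₂ne : u₂ ≠ 0)
    (u₃ : V₃) (hu₃0 : 0 ≤ u₃) (hu₃ne : u₃ ≠ 0)
    (S₁ : Set (V₁ →ₗ[ℝ] ℝ)) (S₂ : Set (V₂ →ₗ[ℝ] ℝ)) (S₃ : Set (V₃ →ₗ[ℝ] ℝ))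
    (hS₁ : IsStateSpace u₁ S₁) (hS₂ : IsStateSpace u₂ S₂) (hS₃ : IsStateSpace u₃ S₃)
    {ΩA ΩB : Type*} [Fintype ΩA] [Nonempty ΩA] [Fintype ΩB] [Nonempty ΩB]
    (A : ΩA → V₁) (hAE : ∀ x, 0 ≤ A x ∧ A x ≤ u₁) (hAobs : (∑ x, A x) = u₁)
    (α : ΩA → (V₂ →ₗ[ℝ] ℝ)) (hα : ∀ x, α x ∈ S₂)
    (B : ΩB → V₂) (hBE : ∀ y, 0 ≤ B y ∧ B y ≤ u₂) (hBobs : (∑ y, B y) = u₂)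
    (β : ΩB → (V₃ →ₗ[ℝ] ℝ)) (hβ : ∀ y, β y ∈ S₃)
    (I : ΩA → (V₁ →ₗ[ℝ] ℝ) → (V₂ →ₗ[ℝ] ℝ))
    (hIdef : ∀ x γ, I x γ = γ (A x) • α x)
    (J : ΩB → (V₂ →ₗ[ℝ] ℝ) → (V₃ →ₗ[ℝ] ℝ))
    (hJdef : ∀ y φ, J y φ = φ (B y) • β y) :
    (∀ γ ∈ S₁, ∀ (x : ΩA) (y : ΩB),
      J y (I x γ) = γ (α x (B y) • A x) • β y) ∧
    (∀ (x : ΩA) (y : ΩB), 0 ≤ α x (B y) • A x ∧ α x (B y) • A x ≤ u₁) ∧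
    (∑ x, ∑ y, α x (B y) • A x) = u₁ := by
  obtain ⟨-, hS₂state, -, -⟩ := hS₂
  refine ⟨?_, ?_, ?_⟩
  · intro γ hγ x y
    rw [hJdef, hIdef]
    simp only [LinearMap.smul_apply, map_smul, smul_eq_mul]
    ring_nf
  · intro x y
    have h0 : 0 ≤ α x (B y) := (hS₂state _ (hα x)).1 _ (hBE y).1
    have h1 : α x (B y) ≤ 1 := by
      have := (hS₂state _ (hα x)).1 _ (sub_nonneg.mpr (hBE y).2)
      have hu : α x u₂ = 1 := (hS₂state _ (hα x)).2
      simpa [map_sub, hu, sub_nonneg] using this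
    refine ⟨hsmul₁ _ _ h0 (hAE x).1, ?_⟩
    calc α x (B y) • A x ≤ A x := by
            have := hsmul₁ (1 - α x (B y)) (A x) (by linarith) (hAE x).1
            have h : A x - α x (B y) • A x = (1 - α x (B y)) • A x := by
              rw [sub_smul, one_smul]
            exact sub_nonneg.mp (h ▸ this)
      _ ≤ u₁ := (hAE x).2
  · have : ∀ x : ΩA, (∑ y, α x (B y) • A x) = A x := by
      intro x
      rw [← Finset.sum_smul, ← map_sum, hBobs, (hS₂state _ (hα x)).2, one_smul]
    simp_rw [this, hAobs]
end

section
/- Let A = (Aₓ)_{x∈Ω_A} be an observable on E₁ with states αₓ ∈ S₂, B = (B_y)_{y∈Ω_B} an observable on E₂ with states β_y ∈ S₃, and let 𝓘ₓ(γ) = γ(Aₓ) • αₓ and Ĵ_y(φ) = φ(B_y) • β_y as for the pure Holevo instruments. Then: (1) for each x ∈ Ω_A the functional δₓ := ∑_{y∈Ω_B} αₓ(B_y) • β_y belongs to S₃ and the first marginal satisfies ∑_{y∈Ω_B} Ĵ_y(𝓘ₓ(γ)) = γ(Aₓ) • δₓ for all γ ∈ S₁ (i.e. it is the pure Holevo instrument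 H^(A,δ)); (2) for each y ∈ Ω_B the element C_y := ∑_{x∈Ω_A} αₓ(B_y) • Aₓ lies in E₁, the family (C_y) is an observable on E₁, and the second marginal satisfies ∑_{x∈Ω_A} Ĵ_y(𝓘ₓ(γ)) = γ(C_y) • β_y for all γ ∈ S₁ (i.e. it is the pure Holevo instrument H^(C,β)). -/
theorem stmt_17
    {V₁ V₂ V₃ : Type*} [AddCommGroup V₁] [PartialOrder V₁] [IsOrderedAddMonoid V₁] [Module ℝ V₁]
    [AddCommGroup V₂] [PartialOrder V₂] [IsOrderedAddMonoid V₂] [Module ℝ V₂]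
    [AddCommGroup V₃] [PartialOrder V₃] [IsOrderedAddMonoid V₃] [Module ℝ V₃]
    (hsmul₁ : ∀ (c : ℝ) (x : V₁), 0 ≤ c → 0 ≤ x → 0 ≤ c • x)
    (hsmul₂ : ∀ (c : ℝ) (x : V₂), 0 ≤ c → 0 ≤ x → 0 ≤ c • x)
    (hsmul₃ : ∀ (c : ℝ) (x : V₃), 0 ≤ c → 0 ≤ x → 0 ≤ c • x)
    (u₁ : V₁) (hu₁0 : 0 ≤ u₁) (hu₁ne : u₁ ≠ 0)
    (u₂ : V₂) (hu₂0 : 0 ≤ u₂) (hu₂ne : u₂ ≠ 0)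
    (u₃ : V₃) (hu₃0 : 0 ≤ u₃) (hu₃ne : u₃ ≠ 0)
    (S₁ : Set (V₁ →ₗ[ℝ] ℝ)) (S₂ : Set (V₂ →ₗ[ℝ] ℝ)) (S₃ : Set (V₃ →ₗ[ℝ] ℝ))
    (hS₁ : IsStateSpace u₁ S₁) (hS₂ : IsStateSpace u₂ S₂) (hS₃ : IsStateSpace u₃ S₃)
    {ΩA ΩB : Type*} [Fintype ΩA] [Nonempty ΩA] [Fintype ΩB] [Nonempty ΩB]
    (A : ΩA → V₁) (hAE : ∀ x, 0 ≤ A x ∧ A x ≤ u₁) (hAobs : (∑ x, A x) = u₁)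
    (α : ΩA → (V₂ →ₗ[ℝ] ℝ)) (hα : ∀ x, α x ∈ S₂)
    (B : ΩB → V₂) (hBE : ∀ y, 0 ≤ B y ∧ B y ≤ u₂) (hBobs : (∑ y, B y) = u₂)
    (β : ΩB → (V₃ →ₗ[ℝ] ℝ)) (hβ : ∀ y, β y ∈ S₃)
    (I : ΩA → (V₁ →ₗ[ℝ] ℝ) → (V₂ →ₗ[ℝ] ℝ))
    (hIdef : ∀ x γ, I x γ = γ (A x) • α x)
    (J : ΩB → (V₂ →ₗ[ℝ] ℝ) → (V₃ →ₗ[ℝ] ℝ))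
    (hJdef : ∀ y φ, J y φ = φ (B y) • β y) :
    (∀ x, (∑ y, α x (B y) • β y) ∈ S₃) ∧
    (∀ γ ∈ S₁, ∀ x, (∑ y, J y (I x γ)) = γ (A x) • (∑ y, α x (B y) • β y)) ∧
    (∀ y, 0 ≤ (∑ x, α x (B y) • A x) ∧ (∑ x, α x (B y) • A x) ≤ u₁) ∧
    (∑ y, ∑ x, α x (B y) • A x) = u₁ ∧
    (∀ γ ∈ S₁, ∀ y, (∑ x, J y (I x γ)) = γ (∑ x, α x (B y) • A x) • β y) := by
  obtain ⟨-, hst₂, -, -⟩ := hS₂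
  obtain ⟨-, -, hconv₃, -⟩ := hS₃
  have hαpos : ∀ x y, 0 ≤ α x (B y) := fun x y =>
    (hst₂ (α x) (hα x)).1 (B y) (hBE y).1
  have hαsum : ∀ x, (∑ y, α x (B y)) = 1 := by
    intro x
    rw [← map_sum, hBobs, (hst₂ (α x) (hα x)).2]
  have hS₃conv : Convex ℝ S₃ := by
    intro s hs s' hs' a b ha hb hab
    have hb' : b = 1 - a := by linarith
    have ha1 : a ≤ 1 := by linarith
    rw [hb']
    exact hconv₃ s hs s' hs' a ha ha1
  refine ⟨?_, ?_, ?_, ?_, ?_⟩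
  · intro x
    exact hS₃conv.sum_mem (fun y _ => hαpos x y)
      (by simpa using hαsum x) (fun y _ => hβ y)
  · intro γ _ x
    rw [Finset.smul_sum]
    refine Finset.sum_congr rfl fun y _ => ?_
    rw [hJdef, hIdef]
    simp [smul_smul, mul_comm]
  · intro y
    have hpos : ∀ y, 0 ≤ (∑ x, α x (B y) • A x) :=
      fun y => Finset.sum_nonneg fun x _ => hsmul₁ _ _ (hαpos x y) (hAE x).1
    refine ⟨hpos y, ?_⟩
    have htot : (∑ y', ∑ x, α x (B y') • A x) = u₁ := by
      rw [Finset.sum_comm]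
      calc (∑ x, ∑ y', α x (B y') • A x)
          = ∑ x, (∑ y', α x (B y')) • A x := by
            refine Finset.sum_congr rfl fun x _ => ?_
            rw [Finset.sum_smul]
        _ = ∑ x, A x := by
            refine Finset.sum_congr rfl fun x _ => ?_
            rw [hαsum x, one_smul]
        _ = u₁ := hAobs
    calc (∑ x, α x (B y) • A x)
        ≤ ∑ y', ∑ x, α x (B y') • A x := by
          exact Finset.single_le_sum (fun y' _ => hpos y') (Finset.mem_univ y)
      _ = u₁ := htot
  · rw [Finset.sum_comm]
    calc (∑ x, ∑ y, α x (B y) • A x)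
        = ∑ x, (∑ y, α x (B y)) • A x := by
          refine Finset.sum_congr rfl fun x _ => ?_
          rw [Finset.sum_smul]
      _ = ∑ x, A x := by
          refine Finset.sum_congr rfl fun x _ => ?_
          rw [hαsum x, one_smul]
      _ = u₁ := hAobs
  · intro γ _ y
    have : γ (∑ x, α x (B y) • A x) = ∑ x, α x (B y) * γ (A x) := by
      rw [map_sum]; exact Finset.sum_congr rfl fun x _ => by rw [map_smul]; rfl
    rw [this, Finset.sum_smul]
    refine Finset.sum_congr rfl fun x _ => ?_
    rw [hJdef, hIdef]
    simp [smul_smul, mul_comm]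
end

section
/- Let A = (Aₓ)_{x∈Ω_A} and B = (B_y)_{y∈Ω_B} be observables on E and let βₓ ∈ S for each x ∈ Ω_A. Then the Holevo sequential product (A∘B)_{xy} := βₓ(B_y) • Aₓ is a bi-observable on E: each (A∘B)_{xy} ∈ E and ∑_{x,y} (A∘B)_{xy} = u; its first marginal is A, i.e. ∑_{y∈Ω_B} βₓ(B_y) • Aₓ = Aₓ for each x; and its second marginal (y ↦ ∑_{x∈Ω_A} βₓ(B_y) • Aₓ) is an observable on E. Hence A coexists with the observable y ↦ ∑ₓ βₓ(B_y) • Aₓ, with joint bi-observable A∘B. -/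
theorem stmt_18
    {V : Type*} [AddCommGroup V] [PartialOrder V] [IsOrderedAddMonoid V] [Module ℝ V]
    (hsmul : ∀ (c : ℝ) (x : V), 0 ≤ c → 0 ≤ x → 0 ≤ c • x)
    (u : V) (hu0 : 0 ≤ u) (hune : u ≠ 0)
    (S : Set (V →ₗ[ℝ] ℝ)) (hS : IsStateSpace u S)
    {ΩA ΩB : Type*} [Fintype ΩA] [Nonempty ΩA] [Fintype ΩB] [Nonempty ΩB]
    (A : ΩA → V) (hAE : ∀ x, 0 ≤ A x ∧ A x ≤ u) (hAobs : (∑ x, A x) = u)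
    (B : ΩB → V) (hBE : ∀ y, 0 ≤ B y ∧ B y ≤ u) (hBobs : (∑ y, B y) = u)
    (β : ΩA → (V →ₗ[ℝ] ℝ)) (hβ : ∀ x, β x ∈ S) :
    (∀ (x : ΩA) (y : ΩB), 0 ≤ β x (B y) • A x ∧ β x (B y) • A x ≤ u) ∧
    (∑ x, ∑ y, β x (B y) • A x) = u ∧
    (∀ x, (∑ y, β x (B y) • A x) = A x) ∧
    (∀ y, 0 ≤ (∑ x, β x (B y) • A x) ∧ (∑ x, β x (B y) • A x) ≤ u) ∧
    (∑ y, ∑ x, β x (B y) • A x) = u := by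
  obtain ⟨-, hstate, -, -⟩ := hS
  have hpos : ∀ x, ∀ v : V, 0 ≤ v → 0 ≤ β x v := fun x => (hstate _ (hβ x)).1
  have hβu : ∀ x, β x u = 1 := fun x => (hstate _ (hβ x)).2
  have hc0 : ∀ x y, 0 ≤ β x (B y) := fun x y => hpos x _ (hBE y).1
  have hc1 : ∀ x y, β x (B y) ≤ 1 := by
    intro x y
    have h := hpos x (u - B y) (sub_nonneg.mpr (hBE y).2)
    have := (β x).map_sub u (B y)
    rw [this, hβu] at h
    linarith
  have hmarg : ∀ x, (∑ y, β x (B y) • A x) = A x := by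
    intro x
    rw [← Finset.sum_smul, ← map_sum, hBobs, hβu, one_smul]
  have heff : ∀ (x : ΩA) (y : ΩB), 0 ≤ β x (B y) • A x ∧ β x (B y) • A x ≤ u := by
    intro x y
    refine ⟨hsmul _ _ (hc0 x y) (hAE x).1, ?_⟩
    have h1 : β x (B y) • A x ≤ A x := by
      have h := hsmul (1 - β x (B y)) (A x) (by linarith [hc1 x y]) (hAE x).1
      have e : (1 - β x (B y)) • A x = A x - β x (B y) • A x := by
        rw [sub_smul, one_smul]
      rw [e] at h
      exact sub_nonneg.mp h
    exact h1.trans (hAE x).2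
  refine ⟨heff, ?_, hmarg, ?_, ?_⟩
  · rw [Finset.sum_congr rfl (fun x _ => hmarg x), hAobs]
  · intro y
    constructor
    · exact Finset.sum_nonneg fun x _ => (heff x y).1
    · calc (∑ x, β x (B y) • A x) ≤ ∑ x, A x := by
            apply Finset.sum_le_sum
            intro x _
            have h := hsmul (1 - β x (B y)) (A x) (by linarith [hc1 x y]) (hAE x).1
            have e : (1 - β x (B y)) • A x = A x - β x (B y) • A x := by
              rw [sub_smul, one_smul]
            rw [e] at h
            exact sub_nonneg.mp h
        _ = u := hAobs
  · rw [Finset.sum_comm, Finset.sum_congr rfl (fun x _ => hmarg x), hAobs]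
end
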